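/- arXiv:2204.01445 — 2 statements merged into one kernel-verified Lean document; each statement's English description precedes it below -/
import Mathlib

section
/- (G^1, •) is a (noncommutative) group with unit the constant series 1: for every f ∈ G^1 there exists a unique f^{•−1} ∈ G^1 with f^{•−1} • f = 1 = f • f^{•−1}. -/
/-- Words over the alphabet of positive integers. -/
abbrev Word : Type := List ℕ+

variable {A : Type*}

/-- The constant series `1`: coefficient `1` on the empty word, `0` elsewhere. -/
def one [CommRing A] : Word → A := fun w => if w = [] then 1 else 0

/-- Cauchy product of noncommutative series:
`(f·g)(w) = Σ f(u) g(v)` over all factorizations `w = u ++ v`. -/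
def cauchy [CommRing A] (f g : Word → A) : Word → A := fun w =>
  ∑ k ∈ Finset.range (w.length + 1), f (w.take k) * g (w.drop k)

/-- The subword of `w` consisting of the letters at positions in `S` (in increasing order). -/
def subword (w : Word) (S : Finset ℕ) : Word :=
  (((List.range w.length).zip w).filter (fun p => decide (p.1 ∈ S))).map Prod.snd

/-- The (possibly empty) factor of `w` occupying the positions strictly between `s` and the
next element of `S` after `s` (or the end of the word if there is no such element). -/
def gapAfter (w : Word) (S : Finset ℕ) (s : ℕ) : Word :=
  (((List.range w.length).zip w).filter (fun p => decide (s < p.1 ∧ ∀ j ∈ S, j ≤ s ∨ p.1 < j))).map Prod.snd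

/-- Shifted substitution `f(xg(x))`: its constant coefficient is `f(∅)`, and its coefficient
on a nonempty word `w = a_1⋯a_n` is the sum, over subsets `S = {s_1<⋯<s_k}` of the positions
of `w` containing the first position, of `f(a_{s_1}⋯a_{s_k})·g(w_{(s_1,s_2)})⋯g(w_{(s_k,n+1)})`,
where `w_{(s_j,s_{j+1})}` is the factor of `w` strictly between positions `s_j` and `s_{j+1}`. -/
def subst [CommRing A] (f g : Word → A) : Word → A := fun w =>
  if w = [] then f []
  else ∑ S ∈ (Finset.range w.length).powerset.filter (fun S => 0 ∈ S),
    f (subword w S) * ∏ s ∈ S, g (gapAfter w S s)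

/-- Shifted composition `f • g := g · f(xg(x))`. -/
def bullet [CommRing A] (f g : Word → A) : Word → A := cauchy g (subst f g)

namespace Sel

def selFrom (m : ℕ) (q : ℕ → Bool) (w : Word) : Word :=
  (((List.range' m w.length).zip w).filter (fun p => q p.1)).map Prod.snd

def sel (q : ℕ → Bool) (w : Word) : Word := selFrom 0 q w

lemma subword_eq_sel (w : Word) (S : Finset ℕ) :
    subword w S = sel (fun i => decide (i ∈ S)) w := by
  simp only [subword, sel, selFrom, List.range_eq_range']

lemma gapAfter_eq_sel (w : Word) (S : Finset ℕ) (s : ℕ) :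
    gapAfter w S s = sel (fun i => decide (s < i ∧ ∀ j ∈ S, j ≤ s ∨ i < j)) w := by
  simp only [gapAfter, sel, selFrom, List.range_eq_range']

lemma selFrom_nil (m q) : selFrom m q [] = [] := rfl

lemma selFrom_cons (m q) (a : ℕ+) (v : Word) :
    selFrom m q (a :: v) = (if q m then [a] else []) ++ selFrom (m+1) q v := by
  simp only [selFrom, List.length_cons, List.range'_succ, List.zip_cons_cons, List.filter_cons]
  by_cases h : q m <;> simp [h]

lemma selFrom_shift (q) (w : Word) : ∀ m, selFrom (m+1) q w = selFrom m (fun i => q (i+1)) w := by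
  induction w with
  | nil => intro m; rfl
  | cons a v ih =>
    intro m
    rw [selFrom_cons, selFrom_cons, ih]

lemma sel_cons (q) (a : ℕ+) (v : Word) :
    sel q (a :: v) = (if q 0 then [a] else []) ++ sel (fun i => q (i+1)) v := by
  rw [sel, selFrom_cons, selFrom_shift]; rfl

lemma sel_congr {q q' : ℕ → Bool} (h : ∀ i, q i = q' i) (w : Word) : sel q w = sel q' w := by
  have : q = q' := funext h
  rw [this]

lemma sel_false {q : ℕ → Bool} (h : ∀ i, q i = false) (w : Word) : sel q w = [] := by
  induction w generalizing q with
  | nil => rfl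
  | cons a v ih =>
    rw [sel_cons, h 0]
    simpa using ih (fun i => h (i+1))

lemma sel_true {q : ℕ → Bool} (h : ∀ i, q i = true) (w : Word) : sel q w = w := by
  induction w generalizing q with
  | nil => rfl
  | cons a v ih =>
    rw [sel_cons, h 0]
    simp [ih (fun i => h (i+1))]

lemma sel_lt (k : ℕ) (w : Word) : sel (fun i => decide (i < k)) w = w.take k := by
  induction w generalizing k with
  | nil => simp [sel, selFrom]
  | cons a v ih =>
    rw [sel_cons]
    cases k with
    | zero => simp [sel_false]
    | succ k' =>
      simp only [decide_eq_true_eq]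
      rw [if_pos (Nat.succ_pos k')]
      have : (fun i => decide (i + 1 < k' + 1)) = (fun i => decide (i < k')) := by
        funext i; simp
      rw [this, ih]
      rfl

lemma sel_drop {q : ℕ → Bool} (k : ℕ) (h : ∀ i < k, q i = false) (w : Word) :
    sel q w = sel (fun i => q (i + k)) (w.drop k) := by
  induction k generalizing q w with
  | zero => simp
  | succ k' ih =>
    cases w with
    | nil => rfl
    | cons a v =>
      rw [sel_cons, h 0 (Nat.succ_pos k')]
      simp only [if_false, Bool.false_eq_true, List.nil_append]
      rw [ih (fun i hi => h (i+1) (by omega)) v]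
      have : (fun i => q (i + k' + 1)) = (fun i => q (i + (k'+1))) := by
        funext i; rw [Nat.add_assoc]
      rw [this, List.drop_succ_cons]



section Struct
open Sel

variable {k : ℕ} {S' : Finset ℕ} (a : ℕ+) (v : Word)

/-- the glued subset -/
def glue (k : ℕ) (S' : Finset ℕ) : Finset ℕ := insert 0 (S'.image (· + (k+1)))

lemma mem_glue {i : ℕ} : i ∈ glue k S' ↔ i = 0 ∨ ∃ s' ∈ S', s' + (k+1) = i := by
  simp [glue]

lemma subword_glue (h0 : 0 ∈ S') :
    subword (a :: v) (glue k S') = a :: subword (v.drop k) S' := by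
  rw [subword_eq_sel, sel_cons]
  rw [if_pos (by simp [mem_glue])]
  rw [subword_eq_sel]
  have h1 : ∀ i < k, (fun i => decide (i + 1 ∈ glue k S')) i = false := by
    intro i hi
    simp only [decide_eq_false_iff_not, mem_glue]
    rintro (h | ⟨s', _, h⟩) <;> omega
  rw [sel_drop k h1]
  have h2 : ∀ i, decide (i + k + 1 ∈ glue k S') = decide (i ∈ S') := by
    intro i
    rw [decide_eq_decide, mem_glue]
    constructor
    · rintro (h | ⟨s', hs', h⟩)
      · omega
      · have : s' = i := by omega
        rwa [← this]
    · intro h; exact Or.inr ⟨i, h, by omega⟩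
  rw [sel_congr h2]
  rfl

lemma gapAfter_glue_zero (h0 : 0 ∈ S') :
    gapAfter (a :: v) (glue k S') 0 = v.take k := by
  rw [gapAfter_eq_sel, sel_cons]
  rw [if_neg (by simp)]
  have h2 : ∀ i, (fun i => decide (0 < i + 1 ∧ ∀ j ∈ glue k S', j ≤ 0 ∨ i + 1 < j)) i
      = decide (i < k) := by
    intro i
    rw [decide_eq_decide]
    constructor
    · rintro ⟨-, h⟩
      have := h (k+1) (by rw [mem_glue]; exact Or.inr ⟨0, h0, by omega⟩)
      omega
    · intro h
      refine ⟨by omega, ?_⟩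
      intro j hj
      rw [mem_glue] at hj
      rcases hj with h' | ⟨s', _, h'⟩ <;> omega
  rw [sel_congr h2, sel_lt]
  rfl

lemma gapAfter_glue {s : ℕ} :
    gapAfter (a :: v) (glue k S') (s + (k+1)) = gapAfter (v.drop k) S' s := by
  rw [gapAfter_eq_sel, sel_cons]
  rw [if_neg (by simp)]
  have h1 : ∀ i < k, (fun i =>
      decide (s + (k+1) < i + 1 ∧ ∀ j ∈ glue k S', j ≤ s + (k+1) ∨ i + 1 < j)) i = false := by
    intro i hi
    simp only [decide_eq_false_iff_not]
    rintro ⟨h, -⟩; omega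
  rw [sel_drop k h1, gapAfter_eq_sel]
  have h2 : ∀ i, decide (s + (k+1) < i + k + 1 ∧ ∀ j ∈ glue k S', j ≤ s + (k+1) ∨ i + k + 1 < j)
      = decide (s < i ∧ ∀ j ∈ S', j ≤ s ∨ i < j) := by
    intro i
    rw [decide_eq_decide]
    constructor
    · rintro ⟨h, hall⟩
      refine ⟨by omega, ?_⟩
      intro j hj
      have := hall (j + (k+1)) (by rw [mem_glue]; exact Or.inr ⟨j, hj, rfl⟩)
      omega
    · rintro ⟨h, hall⟩
      refine ⟨by omega, ?_⟩
      intro j hj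
      rw [mem_glue] at hj
      rcases hj with h' | ⟨s'', hs'', h'⟩
      · omega
      · have := hall s'' hs''
        omega
  rw [sel_congr h2]
  rfl

lemma subword_singleton : subword (a :: v) {0} = [a] := by
  rw [subword_eq_sel, sel_cons, if_pos (by simp)]
  rw [sel_false (q := fun i => decide (i + 1 ∈ ({0} : Finset ℕ))) (by simp)]
  rfl

lemma gapAfter_singleton_zero : gapAfter (a :: v) {0} 0 = v := by
  rw [gapAfter_eq_sel, sel_cons, if_neg (by simp)]
  rw [List.nil_append]
  apply sel_true
  intro i
  simp

end Struct

section Key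
open Sel Finset

variable [CommRing A] (f g : Word → A)

lemma subst_nil : subst f g [] = f [] := rfl

lemma glue_mem {n k : ℕ} {S' : Finset ℕ} (hk : k ∈ range n)
    (hS' : S' ∈ (range (n - k)).powerset.filter (fun S => 0 ∈ S)) :
    glue k S' ∈ ((range (n + 1)).powerset.filter (fun S => 0 ∈ S)).erase {0} := by
  rw [mem_filter, mem_powerset] at hS'
  rw [mem_range] at hk
  obtain ⟨hsub, h0⟩ := hS'
  rw [mem_erase, mem_filter, mem_powerset]
  refine ⟨?_, ?_, by simp [glue]⟩
  · intro h
    have : k + 1 ∈ glue k S' := by rw [mem_glue]; exact Or.inr ⟨0, h0, by omega⟩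
    rw [h, Finset.mem_singleton] at this
    omega
  · intro x hx
    rw [mem_glue] at hx
    rw [mem_range]
    rcases hx with h | ⟨s', hs', h⟩
    · omega
    · have := hsub hs'
      rw [mem_range] at this
      omega

lemma erase_zero_nonempty {S : Finset ℕ}
    (hS : S ∈ ((Finset.range (n + 1)).powerset.filter (fun S => 0 ∈ S)).erase {0}) :
    (S.erase 0).Nonempty := by
  rw [mem_erase, mem_filter] at hS
  obtain ⟨hne, -, h0⟩ := hS
  rcases (S.erase 0).eq_empty_or_nonempty with h | h
  · exfalso
    apply hne
    ext x
    simp only [Finset.mem_singleton]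
    constructor
    · intro hx
      by_contra hx0
      have : x ∈ S.erase 0 := Finset.mem_erase.2 ⟨hx0, hx⟩
      rw [h] at this
      exact absurd this (Finset.notMem_empty x)
    · rintro rfl; exact h0
  · exact h


lemma glue_pos_mem {k : ℕ} {S' : Finset ℕ} {y : ℕ} (hy : y ∈ (glue k S').erase 0) :
    ∃ s' ∈ S', s' + (k+1) = y := by
  rw [Finset.mem_erase, mem_glue] at hy
  rcases hy with ⟨h0, h | h⟩
  · omega
  · exact h

lemma min'_glue {k : ℕ} {S' : Finset ℕ} (h0 : 0 ∈ S')
    (h : ((glue k S').erase 0).Nonempty) : ((glue k S').erase 0).min' h = k + 1 := by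
  apply le_antisymm
  · apply Finset.min'_le
    rw [Finset.mem_erase, mem_glue]
    exact ⟨by omega, Or.inr ⟨0, h0, by omega⟩⟩
  · apply Finset.le_min'
    intro y hy
    obtain ⟨s', -, h⟩ := glue_pos_mem hy
    omega

lemma image_sub_glue {k : ℕ} {S' : Finset ℕ} :
    ((glue k S').erase 0).image (· - (k+1)) = S' := by
  ext x
  rw [Finset.mem_image]
  constructor
  · rintro ⟨y, hy, rfl⟩
    obtain ⟨s', hs', h⟩ := glue_pos_mem hy
    have : y - (k+1) = s' := by omega
    rwa [this]
  · intro hx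
    refine ⟨x + (k+1), ?_, by omega⟩
    rw [Finset.mem_erase, mem_glue]
    exact ⟨by omega, Or.inr ⟨x, hx, rfl⟩⟩

lemma prod_glue {M : Type*} [CommMonoid M] {k : ℕ} {S' : Finset ℕ} (G : ℕ → M) :
    ∏ s ∈ glue k S', G s = G 0 * ∏ s' ∈ S', G (s' + (k+1)) := by
  have h1 : (0:ℕ) ∉ S'.image (· + (k+1)) := by simp
  calc ∏ s ∈ glue k S', G s = ∏ s ∈ insert 0 (S'.image (· + (k+1))), G s := rfl
  _ = G 0 * ∏ s ∈ S'.image (· + (k+1)), G s := Finset.prod_insert h1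
  _ = G 0 * ∏ s' ∈ S', G (s' + (k+1)) := by
      rw [Finset.prod_image (fun p _ q _ h => by omega)]

lemma glue_back {S : Finset ℕ} (h0 : 0 ∈ S) {m : ℕ} (hm : m ∈ S.erase 0)
    (hmin : ∀ y ∈ S.erase 0, m ≤ y) :
    glue (m - 1) ((S.erase 0).image (· - m)) = S := by
  have hm1 : m ≠ 0 := (Finset.mem_erase.1 hm).1
  ext x
  rw [mem_glue]
  constructor
  · rintro (rfl | ⟨s', hs', h⟩)
    · exact h0
    · rw [Finset.mem_image] at hs'
      obtain ⟨y, hy, rfl⟩ := hs'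
      have h1 := hmin y hy
      have : y - m + (m - 1 + 1) = y := by omega
      rw [this] at h
      rw [← h]
      exact (Finset.mem_erase.1 hy).2
  · intro hx
    rcases Nat.eq_zero_or_pos x with rfl | hxpos
    · exact Or.inl rfl
    · refine Or.inr ⟨x - m, ?_, ?_⟩
      · rw [Finset.mem_image]
        exact ⟨x, Finset.mem_erase.2 ⟨by omega, hx⟩, rfl⟩
      · have := hmin x (Finset.mem_erase.2 ⟨by omega, hx⟩)
        omega

lemma subst_cons (a : ℕ+) (v : Word) :
    subst f g (a :: v) = ∑ k ∈ range (v.length + 1),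
      g (v.take k) * subst (fun u => f (a :: u)) g (v.drop k) := by
  classical
  set n := v.length with hn
  -- RHS: split off the top term
  rw [Finset.sum_range_succ]
  rw [List.take_length, List.drop_length, subst_nil]
  -- LHS: unfold subst and split off the {0} term
  have hne : (a :: v) ≠ [] := by simp
  rw [subst, if_neg hne]
  have hlen : (a :: v).length = n + 1 := by simp [hn]
  rw [hlen]
  have h0mem : ({0} : Finset ℕ) ∈ (range (n + 1)).powerset.filter (fun S => 0 ∈ S) := by
    simp [Finset.singleton_subset_iff]
  rw [← Finset.add_sum_erase _ _ h0mem]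
  have hsing : f (subword (a :: v) {0}) * ∏ s ∈ ({0} : Finset ℕ), g (gapAfter (a :: v) {0} s)
      = g v * f [a] := by
    rw [subword_singleton, Finset.prod_singleton, gapAfter_singleton_zero]
    ring
  rw [hsing, add_comm]
  congr 1
  -- main bijection
  have hmain : ∀ k ∈ range n, g (v.take k) * subst (fun u => f (a :: u)) g (v.drop k)
      = ∑ S' ∈ (range (n - k)).powerset.filter (fun S => 0 ∈ S),
          g (v.take k) * (f (a :: subword (v.drop k) S')
            * ∏ s ∈ S', g (gapAfter (v.drop k) S' s)) := by
    intro k hk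
    rw [mem_range] at hk
    have hd : v.drop k ≠ [] := by
      rw [ne_eq, List.drop_eq_nil_iff]; omega
    rw [subst, if_neg hd, List.length_drop, Finset.mul_sum]
  rw [Finset.sum_congr rfl hmain, Finset.sum_sigma' (range n)
    (fun k => (range (n - k)).powerset.filter (fun S => 0 ∈ S))]
  refine (Finset.sum_bij' (fun (x : (_ : ℕ) × Finset ℕ) (_ : x ∈ (range n).sigma
      (fun k => (range (n - k)).powerset.filter (fun S => 0 ∈ S))) => glue x.1 x.2)
    (fun S hS => ⟨(S.erase 0).min' (erase_zero_nonempty hS) - 1,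
      (S.erase 0).image (· - (S.erase 0).min' (erase_zero_nonempty hS))⟩)
    (fun x hx => ?_) (fun S hS => ?_) (fun x hx => ?_) (fun S hS => ?_) (fun x hx => ?_)).symm
  · rw [Finset.mem_sigma] at hx
    exact glue_mem hx.1 hx.2
  · -- j maps into sigma set
    have hne' := erase_zero_nonempty hS
    have hmmem : (S.erase 0).min' hne' ∈ S.erase 0 := Finset.min'_mem _ _
    rw [Finset.mem_erase, Finset.mem_filter, Finset.mem_powerset] at hS
    obtain ⟨hSne, hsub, h0S⟩ := hS
    have hm0 : (S.erase 0).min' hne' ≠ 0 := (Finset.mem_erase.1 hmmem).1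
    have hmn : (S.erase 0).min' hne' ≤ n := by
      have := hsub (Finset.mem_erase.1 hmmem).2
      rw [mem_range] at this; omega
    rw [Finset.mem_sigma]
    constructor
    · show (S.erase 0).min' hne' - 1 ∈ range n
      rw [mem_range]; omega
    · show (S.erase 0).image (· - (S.erase 0).min' hne')
        ∈ (range (n - ((S.erase 0).min' hne' - 1))).powerset.filter (fun S => 0 ∈ S)
      rw [Finset.mem_filter, Finset.mem_powerset]
      constructor
      · intro x hx
        rw [Finset.mem_image] at hx
        obtain ⟨y, hy, rfl⟩ := hx
        have h1 := Finset.min'_le _ y hy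
        have h2 := hsub (Finset.mem_erase.1 hy).2
        rw [mem_range] at h2 ⊢
        omega
      · rw [Finset.mem_image]
        exact ⟨(S.erase 0).min' hne', hmmem, by omega⟩
  · -- left inverse
    rw [Finset.mem_sigma, Finset.mem_filter, Finset.mem_powerset] at hx
    obtain ⟨hk, hsub, h0⟩ := hx
    have hnon : ((glue x.1 x.2).erase 0).Nonempty :=
      ⟨x.1 + 1, by rw [Finset.mem_erase, mem_glue]; exact ⟨by omega, Or.inr ⟨0, h0, by omega⟩⟩⟩
    have h1 : ((glue x.1 x.2).erase 0).min' hnon = x.1 + 1 := min'_glue h0 hnon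
    show (⟨((glue x.1 x.2).erase 0).min' hnon - 1,
      ((glue x.1 x.2).erase 0).image (· - ((glue x.1 x.2).erase 0).min' hnon)⟩
        : (_ : ℕ) × Finset ℕ) = x
    rw [h1, image_sub_glue]
    simp
  · -- right inverse
    dsimp only
    rw [Finset.mem_erase, Finset.mem_filter, Finset.mem_powerset] at hS
    exact glue_back hS.2.2 (Finset.min'_mem _ _) (fun y hy => Finset.min'_le _ y hy)
  · -- value equality
    rw [Finset.mem_sigma, Finset.mem_filter, Finset.mem_powerset] at hx
    obtain ⟨hk, hsub, h0⟩ := hx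
    rw [subword_glue a (v := v) (k := x.1), prod_glue, gapAfter_glue_zero a v h0]
    simp only [gapAfter_glue]
    ring
    exact h0

lemma subst_cons' (a : ℕ+) (v : Word) :
    subst f g (a :: v) = cauchy g (subst (fun u => f (a :: u)) g) v := by
  rw [subst_cons]; rfl

end Key

section Alg
open Finset Sel

variable [CommRing A]

lemma sum_range_tri {M : Type*} [AddCommMonoid M] (N : ℕ) (F : ℕ → ℕ → M) :
    ∑ k ∈ range (N+1), ∑ j ∈ range (N-k+1), F k (k+j)
      = ∑ m ∈ range (N+1), ∑ k ∈ range (m+1), F k m := by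
  rw [Finset.sum_sigma' (range (N+1)) (fun k => range (N-k+1)) (fun k j => F k (k+j)),
    Finset.sum_sigma' (range (N+1)) (fun m => range (m+1)) (fun m k => F k m)]
  refine Finset.sum_nbij' (fun x => ⟨x.1 + x.2, x.1⟩) (fun x => ⟨x.2, x.1 - x.2⟩) ?_ ?_ ?_ ?_ ?_
  · rintro ⟨k, j⟩ h
    simp only [Finset.mem_sigma, mem_range] at h
    obtain ⟨h1, h2⟩ := h
    simp only [Finset.mem_sigma, mem_range]
    constructor <;> omega
  · rintro ⟨m, k⟩ h
    simp only [Finset.mem_sigma, mem_range] at h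
    obtain ⟨h1, h2⟩ := h
    simp only [Finset.mem_sigma, mem_range]
    constructor <;> omega
  · rintro ⟨k, j⟩ h
    simp
  · rintro ⟨m, k⟩ h
    simp only [Finset.mem_sigma, mem_range] at h
    obtain ⟨h1, h2⟩ := h
    have hkm : k + (m - k) = m := by omega
    simp [hkm]
  · rintro ⟨k, j⟩ h
    rfl

lemma cauchy_assoc_pt (x y z : Word → A) (w : Word) :
    cauchy x (cauchy y z) w = cauchy (cauchy x y) z w := by
  unfold cauchy
  calc ∑ k ∈ range (w.length+1), x (w.take k)
        * ∑ j ∈ range ((w.drop k).length + 1), y ((w.drop k).take j) * z ((w.drop k).drop j)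
      = ∑ k ∈ range (w.length+1), ∑ j ∈ range (w.length - k + 1),
          x (w.take k) * (y ((w.take (k+j)).drop k) * z (w.drop (k+j))) := by
        refine Finset.sum_congr rfl fun k hk => ?_
        rw [List.length_drop, Finset.mul_sum]
        refine Finset.sum_congr rfl fun j hj => ?_
        rw [List.take_drop, List.drop_drop]
    _ = ∑ m ∈ range (w.length+1), ∑ k ∈ range (m+1),
          x (w.take k) * (y ((w.take m).drop k) * z (w.drop m)) :=
        sum_range_tri w.length (fun k m => x (w.take k) * (y ((w.take m).drop k) * z (w.drop m)))
    _ = ∑ m ∈ range (w.length+1),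
          (∑ k ∈ range ((w.take m).length + 1), x ((w.take m).take k) * y ((w.take m).drop k))
            * z (w.drop m) := by
        refine Finset.sum_congr rfl fun m hm => ?_
        rw [mem_range] at hm
        rw [List.length_take, min_eq_left (by omega : m ≤ w.length), Finset.sum_mul]
        refine Finset.sum_congr rfl fun k hk => ?_
        rw [mem_range] at hk
        rw [List.take_take, min_eq_left (by omega : k ≤ m)]
        ring

lemma cauchy_cons (p q : Word → A) (a : ℕ+) (v : Word) :
    cauchy p q (a :: v) = p [] * q (a :: v) + cauchy (fun u => p (a :: u)) q v := by
  show ∑ k ∈ range ((a :: v).length + 1), p ((a::v).take k) * q ((a::v).drop k) = _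
  rw [List.length_cons, Finset.sum_range_succ']
  simp only [List.take_succ_cons, List.drop_succ_cons, List.take_zero, List.drop_zero]
  rw [add_comm]
  rfl

lemma cauchy_one_left (h : Word → A) : cauchy one h = h := by
  funext w
  unfold cauchy one
  cases w with
  | nil => simp
  | cons a v =>
    rw [Finset.sum_eq_single 0]
    · simp
    · intro k hk hk0
      rw [if_neg (by cases k with | zero => omega | succ k' => simp)]
      ring
    · intro h; simp at h

lemma cauchy_one_right (h : Word → A) : cauchy h one = h := by
  funext w
  unfold cauchy one
  rw [Finset.sum_eq_single w.length]
  · simp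
  · intro k hk hk0
    rw [mem_range] at hk
    rw [if_neg (by intro hcon; rw [List.drop_eq_nil_iff] at hcon; omega)]
    ring
  · intro h; simp at h

lemma subst_linear (c : A) (p q g : Word → A) (w : Word) :
    subst (fun u => c * p u + q u) g w = c * subst p g w + subst q g w := by
  unfold subst
  split
  · rfl
  · rw [Finset.mul_sum, ← Finset.sum_add_distrib]
    refine Finset.sum_congr rfl fun S hS => ?_
    ring

lemma subst_zero (g : Word → A) (w : Word) : subst (fun _ => (0:A)) g w = 0 := by
  unfold subst
  split
  · rfl
  · simp

lemma subst_one_left (g : Word → A) : subst one g = one := by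
  funext w
  cases w with
  | nil => rfl
  | cons a v =>
    rw [subst_cons' one g a v]
    have h1 : (fun u => one (a :: u)) = (fun _ : Word => (0:A)) := by
      funext u; simp [one]
    rw [h1]
    have h2 : ∀ u : Word, subst (fun _ : Word => (0:A)) g u = 0 := subst_zero g
    unfold cauchy
    rw [Finset.sum_congr rfl fun k _ => by rw [h2]]
    simp [one]

lemma subst_one_right (f : Word → A) (w : Word) : subst f one w = f w := by
  induction w generalizing f with
  | nil => rfl
  | cons a v ih =>
    rw [subst_cons' f one a v]
    have : cauchy one (subst (fun u => f (a :: u)) one) v = subst (fun u => f (a :: u)) one v := by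
      rw [cauchy_one_left]
    rw [this, ih]

lemma bullet_one_right (f : Word → A) : bullet f one = f := by
  unfold bullet
  rw [cauchy_one_left]
  funext w
  exact subst_one_right f w

lemma bullet_one_left (f : Word → A) : bullet one f = f := by
  unfold bullet
  rw [subst_one_left, cauchy_one_right]

lemma cauchy_congr_right (X Y Y' : Word → A) (v : Word)
    (h : ∀ u : Word, u.length ≤ v.length → Y u = Y' u) : cauchy X Y v = cauchy X Y' v := by
  unfold cauchy
  refine Finset.sum_congr rfl fun k hk => ?_
  rw [h (v.drop k) (by rw [List.length_drop]; omega)]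

lemma cauchy_add_right (X Y Z : Word → A) (c : A) (v : Word) :
    cauchy X (fun u => c * Y u + Z u) v = c * cauchy X Y v + cauchy X Z v := by
  unfold cauchy
  rw [Finset.mul_sum, ← Finset.sum_add_distrib]
  refine Finset.sum_congr rfl fun k hk => ?_
  ring

lemma substA (r : Word → A) :
    ∀ (N : ℕ) (w : Word), w.length ≤ N → ∀ (p q : Word → A),
      subst (cauchy p q) r w = cauchy (subst p r) (subst q r) w := by
  intro N
  induction N with
  | zero =>
    intro w hw p q
    rw [List.length_eq_zero_iff.1 (by omega : w.length = 0)]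
    show subst (cauchy p q) r [] = ∑ k ∈ range 1, subst p r (List.take k []) * subst q r (List.drop k [])
    rw [subst_nil, Finset.sum_range_one]
    show cauchy p q [] = subst p r [] * subst q r []
    rw [subst_nil, subst_nil]
    show ∑ k ∈ range 1, p (List.take k []) * q (List.drop k []) = p [] * q []
    rw [Finset.sum_range_one]
    rfl
  | succ N ihN =>
    intro w hw p q
    cases w with
    | nil =>
      exact ihN [] (by simp) p q
    | cons a v =>
      rw [List.length_cons] at hw
      have hv : v.length ≤ N := by omega
      rw [subst_cons' (cauchy p q) r a v]
      have hL : (fun u => cauchy p q (a :: u))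
          = fun u => p [] * q (a :: u) + cauchy (fun t => p (a :: t)) q u := by
        funext u; exact cauchy_cons p q a u
      rw [hL]
      have e1 : cauchy r (subst (fun u => p [] * q (a :: u) + cauchy (fun t => p (a :: t)) q u) r) v
          = cauchy r (fun u => p [] * subst (fun t => q (a :: t)) r u
              + subst (cauchy (fun t => p (a :: t)) q) r u) v :=
        cauchy_congr_right _ _ _ v (fun u _ => subst_linear _ _ _ _ u)
      rw [e1, cauchy_add_right]
      have e2 : cauchy r (fun u => subst (cauchy (fun t => p (a :: t)) q) r u) v
          = cauchy r (cauchy (subst (fun t => p (a :: t)) r) (subst q r)) v :=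
        cauchy_congr_right _ _ _ v (fun u hu => ihN u (le_trans hu hv) _ _)
      rw [e2, cauchy_assoc_pt]
      rw [cauchy_cons (subst p r) (subst q r) a v, subst_nil]
      have h3 : (fun u => subst p r (a :: u)) = cauchy r (subst (fun t => p (a :: t)) r) := by
        funext u; exact subst_cons' p r a u
      rw [h3, subst_cons' q r a v]

lemma substB (q r : Word → A) :
    ∀ (N : ℕ) (w : Word), w.length ≤ N → ∀ (p : Word → A),
      subst (subst p q) r w = subst p (cauchy r (subst q r)) w := by
  intro N
  induction N with
  | zero =>
    intro w hw p
    rw [List.length_eq_zero_iff.1 (by omega : w.length = 0)]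
    rw [subst_nil, subst_nil, subst_nil]
  | succ N ihN =>
    intro w hw p
    cases w with
    | nil => rw [subst_nil, subst_nil, subst_nil]
    | cons a v =>
      rw [List.length_cons] at hw
      have hv : v.length ≤ N := by omega
      rw [subst_cons' (subst p q) r a v]
      have hL : (fun u => subst p q (a :: u)) = cauchy q (subst (fun t => p (a :: t)) q) := by
        funext u; exact subst_cons' p q a u
      rw [hL]
      have step1 : ∀ u : Word, u.length ≤ N →
          subst (cauchy q (subst (fun t => p (a :: t)) q)) r u
            = cauchy (subst q r) (subst (fun t => p (a :: t)) (cauchy r (subst q r))) u := by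
        intro u hu
        rw [substA r N u hu q (subst (fun t => p (a :: t)) q)]
        exact cauchy_congr_right _ _ _ u (fun t ht => ihN t (le_trans ht hu) _)
      have step2 : cauchy r (subst (cauchy q (subst (fun t => p (a :: t)) q)) r) v
          = cauchy r (cauchy (subst q r)
              (subst (fun t => p (a :: t)) (cauchy r (subst q r)))) v :=
        cauchy_congr_right _ _ _ v (fun u hu => step1 u (le_trans hu hv))
      rw [step2, cauchy_assoc_pt]
      rw [← subst_cons' p (cauchy r (subst q r)) a v]

end Alg

section Main
open Finset Sel

variable [CommRing A]

lemma bullet_assoc (p q r : Word → A) :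
    bullet (bullet p q) r = bullet p (bullet q r) := by
  unfold bullet
  funext w
  have h1 : subst (cauchy q (subst p q)) r
      = cauchy (subst q r) (subst (subst p q) r) := by
    funext u
    exact substA r u.length u le_rfl q (subst p q)
  have h2 : subst (subst p q) r = subst p (cauchy r (subst q r)) := by
    funext u
    exact substB q r u.length u le_rfl p
  rw [h1]
  calc cauchy r (cauchy (subst q r) (subst (subst p q) r)) w
      = cauchy (cauchy r (subst q r)) (subst (subst p q) r) w := cauchy_assoc_pt _ _ _ w
    _ = cauchy (cauchy r (subst q r)) (subst p (cauchy r (subst q r))) w := by rw [h2]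

lemma sel_length_le (q : ℕ → Bool) (w : Word) : (sel q w).length ≤ w.length := by
  unfold sel selFrom
  rw [List.length_map]
  calc (List.filter _ ((List.range' 0 w.length).zip w)).length
        ≤ ((List.range' 0 w.length).zip w).length :=
        List.length_filter_le _ _
    _ = w.length := by simp

lemma gapAfter_length_lt (S : Finset ℕ) (s : ℕ) (a : ℕ+) (v : Word) :
    (gapAfter (a :: v) S s).length < (a :: v).length := by
  rw [gapAfter_eq_sel, sel_cons, if_neg (by simp)]
  rw [List.nil_append, List.length_cons]
  exact Nat.lt_succ_of_le (sel_length_le _ v)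

def rinv (f : Word → A) (w : Word) : A :=
  if h : w = [] then 1 else
    - ∑ k ∈ (Finset.range w.length).attach,
        rinv f (w.take k.1) *
          ∑ S ∈ ((Finset.range (w.drop k.1).length).powerset.filter (fun S => 0 ∈ S)),
            f (subword (w.drop k.1) S) * ∏ s ∈ S, rinv f (gapAfter (w.drop k.1) S s)
termination_by w.length
decreasing_by
  · rw [List.length_take]
    have := k.2
    rw [Finset.mem_range] at this
    omega
  · have hk := k.2
    rw [Finset.mem_range] at hk
    have h1 : w.drop k.1 ≠ [] := by
      intro hcon; rw [List.drop_eq_nil_iff] at hcon; omega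
    obtain ⟨b, u, hbu⟩ := List.exists_cons_of_ne_nil h1
    have h2 : (gapAfter (w.drop k.1) S s).length < (w.drop k.1).length := by
      rw [hbu]; exact gapAfter_length_lt S s b u
    rw [List.length_drop] at h2
    omega

lemma rinv_nil (f : Word → A) : rinv f [] = 1 := by
  rw [rinv]
  simp

lemma bullet_rinv (f : Word → A) (hf : f [] = 1) : bullet f (rinv f) = one := by
  funext w
  show cauchy (rinv f) (subst f (rinv f)) w = one w
  cases w with
  | nil =>
    show ∑ k ∈ range 1, rinv f (List.take k []) * subst f (rinv f) (List.drop k []) = one []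
    rw [Finset.sum_range_one]
    show rinv f [] * subst f (rinv f) [] = one []
    rw [rinv_nil, subst_nil, hf]
    simp [one]
  | cons a v =>
    show ∑ k ∈ range ((a::v).length + 1),
        rinv f ((a::v).take k) * subst f (rinv f) ((a::v).drop k) = one (a :: v)
    rw [Finset.sum_range_succ, List.take_length, List.drop_length, subst_nil, hf, mul_one]
    have hr : rinv f (a :: v) = - ∑ k ∈ range ((a::v).length),
        rinv f ((a::v).take k) * subst f (rinv f) ((a::v).drop k) := by
      rw [rinv]
      rw [dif_neg (by simp : ¬(a :: v) = [])]
      congr 1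
      rw [← Finset.sum_attach (range ((a::v).length))
        (fun k => rinv f ((a::v).take k) * subst f (rinv f) ((a::v).drop k))]
      refine Finset.sum_congr rfl fun k hk => ?_
      congr 1
      have hk2 := k.2
      rw [Finset.mem_range] at hk2
      have h1 : (a :: v).drop k.1 ≠ [] := by
        intro hcon; rw [List.drop_eq_nil_iff] at hcon; omega
      rw [subst, if_neg h1]
    rw [hr]
    have : (one (a :: v) : A) = 0 := by simp [one]
    rw [this]
    ring

end Main

end Sel

/-- `(G^1, •)` is a group with unit the constant series `1`: every
`f ∈ G^1` has a unique two-sided `•`-inverse in `G^1`. -/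
theorem stmt2 [CommRing A] (f : Word → A) (hf : f [] = 1) :
    ∃! g : Word → A, g [] = 1 ∧ bullet g f = one ∧ bullet f g = one := by
  set g := Sel.rinv f with hg
  have hg0 : g [] = 1 := Sel.rinv_nil f
  have hfg : bullet f g = one := Sel.bullet_rinv f hf
  set h := Sel.rinv g with hh
  have hgh : bullet g h = one := Sel.bullet_rinv g hg0
  have hhf : h = f := by
    calc h = bullet one h := (Sel.bullet_one_left h).symm
    _ = bullet (bullet f g) h := by rw [hfg]
    _ = bullet f (bullet g h) := Sel.bullet_assoc f g h
    _ = bullet f one := by rw [hgh]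
    _ = f := Sel.bullet_one_right f
  have hgf : bullet g f = one := by rw [← hhf]; exact hgh
  refine ⟨g, ⟨hg0, hgf, hfg⟩, ?_⟩
  rintro g' ⟨hg'0, hg'f, hfg'⟩
  calc g' = bullet g' one := (Sel.bullet_one_right g').symm
    _ = bullet g' (bullet f g) := by rw [hfg]
    _ = bullet (bullet g' f) g := (Sel.bullet_assoc g' f g).symm
    _ = bullet one g := by rw [hg'f]
    _ = g := Sel.bullet_one_left g
end

section
/- Let m ∈ G^1 and let b ∈ G^0 be the unique series satisfying m = 1 + b·m (Cauchy product); b is the multivariate generating series of Boolean cumulants of m. Then b = 1 − m^{•−1}(x m(x)), where m^{•−1} is the inverse of m in the group (G^1, •) and m^{•−1}(x m(x)) denotes the shifted substitution of m into m^{•−1}. -/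
variable {A : Type*}

section Aux

variable [CommRing A]

lemma cauchy_assoc (f g h : Word → A) (w : Word) :
    cauchy (cauchy f g) h w = cauchy f (cauchy g h) w := by
  unfold cauchy
  set n := w.length with hn
  have key : ∀ k ∈ Finset.range (n + 1),
      (∑ j ∈ Finset.range ((w.take k).length + 1),
          f ((w.take k).take j) * g ((w.take k).drop j)) * h (w.drop k)
      = ∑ j ∈ Finset.range (k + 1),
          f (w.take j) * (g ((w.drop j).take (k - j)) * h (w.drop k)) := by
    intro k hk
    rw [Finset.mem_range, Nat.lt_succ_iff] at hk
    rw [List.length_take, Nat.min_eq_left hk, Finset.sum_mul]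
    refine Finset.sum_congr rfl fun j hj => ?_
    rw [Finset.mem_range, Nat.lt_succ_iff] at hj
    rw [List.take_take, Nat.min_eq_left hj, List.drop_take, mul_assoc]
  rw [Finset.sum_congr rfl key]
  have swap : ∑ k ∈ Finset.range (n + 1), ∑ j ∈ Finset.range (k + 1),
      f (w.take j) * (g ((w.drop j).take (k - j)) * h (w.drop k))
      = ∑ j ∈ Finset.range (n + 1), ∑ k ∈ Finset.Ico j (n + 1),
      f (w.take j) * (g ((w.drop j).take (k - j)) * h (w.drop k)) := by
    simp only [Finset.range_eq_Ico]
    exact (Finset.sum_Ico_Ico_comm 0 (n + 1)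
      (fun j k => f (w.take j) * (g ((w.drop j).take (k - j)) * h (w.drop k)))).symm
  rw [swap]
  refine Finset.sum_congr rfl fun j hj => ?_
  rw [Finset.mem_range, Nat.lt_succ_iff] at hj
  rw [Finset.sum_Ico_eq_sum_range, List.length_drop, Finset.mul_sum]
  have h1 : n + 1 - j = (n - j) + 1 := by omega
  rw [h1]
  refine Finset.sum_congr rfl fun l hl => ?_
  have h2 : j + l - j = l := by omega
  rw [h2, List.drop_drop]

lemma one_of_ne (w : Word) (hw : w ≠ []) : (one : Word → A) w = 0 := if_neg hw

end Aux

/-- let `b ∈ G^0` be the Boolean cumulant series of `m ∈ G^1`, i.e., the unique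
series with `m = 1 + b·m` (Cauchy product), and let `m⁻¹` be the `•`-inverse of `m` in the
group `(G^1, •)`.  Then `b = 1 − m⁻¹(x m(x))`, where `m⁻¹(x m(x))` is the shifted
substitution of `m` into `m⁻¹`. -/
theorem stmt13 [Field A] [CharZero A] (m b minv : Word → A)
    (hm : m [] = 1) (hb : b [] = 0) (hbc : ∀ w, m w = one w + cauchy b m w)
    (hminv : minv [] = 1) (hinv₁ : bullet minv m = one) (hinv₂ : bullet m minv = one) :
    ∀ w, b w = one w - subst minv m w := by
  set s : Word → A := subst minv m with hs
  have hA : ∀ w, cauchy m s w = one w := fun w => congrFun hinv₁ w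
  -- first sum lemma: ∑ one(take k) b(drop k) = b w
  have firstone : ∀ (x : Word → A) (w : Word),
      (∑ k ∈ Finset.range (w.length + 1), one (w.take k) * x (w.drop k)) = x w := by
    intro x w
    rw [Finset.sum_eq_single 0]
    · rw [List.take_zero, List.drop_zero]
      have h0 : (one : Word → A) [] = 1 := rfl
      rw [h0, one_mul]
    · intro k hk hk0
      rw [Finset.mem_range, Nat.lt_succ_iff] at hk
      have : w.take k ≠ [] := by
        intro h
        rcases List.take_eq_nil_iff.mp h with h' | h'
        · exact hk0 h'
        · apply hk0
          rw [h', List.length_nil] at hk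
          omega
      rw [one_of_ne _ this, zero_mul]
    · intro h
      exact absurd (Finset.mem_range.mpr (Nat.succ_pos _)) h
  have lastone : ∀ (x : Word → A) (w : Word),
      (∑ k ∈ Finset.range (w.length + 1), x (w.take k) * one (w.drop k)) = x w := by
    intro x w
    rw [Finset.sum_eq_single w.length]
    · simp [one, List.take_length, List.drop_length]
    · intro k hk hk0
      rw [Finset.mem_range, Nat.lt_succ_iff] at hk
      have hlt : k < w.length := lt_of_le_of_ne hk hk0
      have : w.drop k ≠ [] := by
        intro h
        have := List.drop_eq_nil_iff.mp h
        omega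
      rw [one_of_ne _ this, mul_zero]
    · intro h
      exact absurd (Finset.mem_range.mpr (Nat.lt_succ_self _)) h
  -- u-equation and v-equation
  have ueq : ∀ w : Word, cauchy m b w = b w + cauchy b (cauchy m b) w := by
    intro w
    rw [← cauchy_assoc]
    conv_lhs => rw [cauchy]
    have : ∀ k ∈ Finset.range (w.length + 1), m (w.take k) * b (w.drop k)
        = one (w.take k) * b (w.drop k) + cauchy b m (w.take k) * b (w.drop k) := by
      intro k _
      rw [hbc (w.take k), add_mul]
    rw [Finset.sum_congr rfl this, Finset.sum_add_distrib, firstone]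
    rfl
  have veq : ∀ w : Word, cauchy b m w = b w + cauchy b (cauchy b m) w := by
    intro w
    conv_lhs => rw [cauchy]
    have : ∀ k ∈ Finset.range (w.length + 1), b (w.take k) * m (w.drop k)
        = b (w.take k) * one (w.drop k) + b (w.take k) * cauchy b m (w.drop k) := by
      intro k _
      rw [hbc (w.drop k), mul_add]
    rw [Finset.sum_congr rfl this, Finset.sum_add_distrib, lastone]
    rfl
  -- commutation of m and b under Cauchy product
  have comm : ∀ n : ℕ, ∀ w : Word, w.length = n → cauchy m b w = cauchy b m w := by
    intro n
    induction n using Nat.strong_induction_on with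
    | _ n ih =>
      intro w hw
      rw [ueq w, veq w]
      congr 1
      unfold cauchy
      refine Finset.sum_congr rfl fun k hk => ?_
      rw [Finset.mem_range, Nat.lt_succ_iff] at hk
      rcases Nat.eq_zero_or_pos k with h0 | hpos
      · subst h0; simp [hb]
      · congr 1
        exact ih (w.drop k).length (by rw [List.length_drop]; omega) _ rfl
  -- main induction
  have main : ∀ n : ℕ, ∀ w : Word, w.length = n → b w = one w - s w := by
    intro n
    induction n using Nat.strong_induction_on with
    | _ n ih =>
      intro w hw
      rcases eq_or_ne w [] with rfl | hne
      · simp [one, hb, hs, subst, hminv]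
      · have hone : (one : Word → A) w = 0 := one_of_ne w hne
        have hn : 0 < w.length := List.length_pos_iff.mpr hne
        have h1 := hA w
        rw [cauchy, Finset.sum_range_succ'] at h1
        simp only [List.take_zero, List.drop_zero, hm, one_mul] at h1
        have hrw : ∀ i ∈ Finset.range w.length, m (w.take (i + 1)) * s (w.drop (i + 1))
            = m (w.take (i + 1)) * one (w.drop (i + 1))
              - m (w.take (i + 1)) * b (w.drop (i + 1)) := by
          intro i hi
          rw [Finset.mem_range] at hi
          have hih := ih (w.drop (i + 1)).length (by rw [List.length_drop]; omega) _ rfl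
          have : s (w.drop (i + 1)) = one (w.drop (i + 1)) - b (w.drop (i + 1)) := by
            rw [hih]; ring
          rw [this, mul_sub]
        rw [Finset.sum_congr rfl hrw, Finset.sum_sub_distrib] at h1
        -- first sum equals m w
        have hs1 : (∑ i ∈ Finset.range w.length,
            m (w.take (i + 1)) * one (w.drop (i + 1))) = m w := by
          rw [Finset.sum_eq_single (w.length - 1)]
          · have : w.length - 1 + 1 = w.length := by omega
            rw [this]
            simp [one, List.take_length, List.drop_length]
          · intro k hk hk0
            rw [Finset.mem_range] at hk
            have : w.drop (k + 1) ≠ [] := by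
              intro h
              have := List.drop_eq_nil_iff.mp h
              omega
            rw [one_of_ne _ this, mul_zero]
          · intro h
            exact absurd (Finset.mem_range.mpr (by omega)) h
        -- second sum equals cauchy m b w - b w
        have hs2 : (∑ i ∈ Finset.range w.length,
            m (w.take (i + 1)) * b (w.drop (i + 1))) = cauchy m b w - b w := by
          have := Finset.sum_range_succ' (fun k => m (w.take k) * b (w.drop k)) w.length
          rw [cauchy]
          simp only [List.take_zero, List.drop_zero, hm, one_mul] at this ⊢
          rw [this]; ring
        have hcomm := comm w.length w rfl
        have hbcw := hbc w
        rw [hs1, hs2, hcomm, hone] at h1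
        rw [hone] at hbcw
        have : cauchy b m w = m w := by rw [hbcw]; ring
        rw [this] at h1
        rw [hone]
        linear_combination h1
  intro w
  exact main w.length w rfl
end
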